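/- Let x ⊆ [n]_{j+1} and x̄ ⊆ [n]_{j+2} with j odd. Suppose x and x̄ are well-formed and x̄⁻ ∩ x = ∅. Then x̄ ∪ x∨ is well-formed. -/

import Mathlib

/-- `Simplex n j` is the set `[n]_j` of order-preserving injections `[j] ↪ [n]`. -/
abbrev Simplex (n j : ℕ) := Fin (j+1) ↪o Fin (n+1)

/-- The `k`-th face `a ∘ δ_k` of `a ∈ [n]_{j+1}`. -/
def face {n j : ℕ} (a : Simplex n (j+1)) (k : Fin (j+2)) : Simplex n j :=
  (Fin.succAboveOrderEmb k).trans a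

/-- The even faces `a⁺` of `a`. -/
def posFaces {n j : ℕ} (a : Simplex n (j+1)) : Set (Simplex n j) :=
  {b | ∃ k : Fin (j+2), Even (k : ℕ) ∧ b = face a k}

/-- The odd faces `a⁻` of `a`. -/
def negFaces {n j : ℕ} (a : Simplex n (j+1)) : Set (Simplex n j) :=
  {b | ∃ k : Fin (j+2), Odd (k : ℕ) ∧ b = face a k}

def setPos {n j : ℕ} (ξ : Set (Simplex n (j+1))) : Set (Simplex n j) := ⋃ a ∈ ξ, posFaces a
def setNeg {n j : ℕ} (ξ : Set (Simplex n (j+1))) : Set (Simplex n j) := ⋃ a ∈ ξ, negFaces a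

/-- The inclusion `[n]_j ⊆ [n+1]_j`. -/
def liftS {n j : ℕ} (a : Simplex n j) : Simplex (n+1) j :=
  a.trans (OrderEmbedding.ofStrictMono Fin.castSucc Fin.strictMono_castSucc)

/-- `a∨ ∈ [n+1]_{j+1}`: append the new top element `n+1` to `a ∈ [n]_j`. -/
def vee {n j : ℕ} (a : Simplex n j) : Simplex (n+1) (j+1) :=
  OrderEmbedding.ofStrictMono (Fin.snoc (fun i => (a i).castSucc) (Fin.last (n+1))) (by
    intro i k h
    rcases Fin.eq_castSucc_or_eq_last k with ⟨k', rfl⟩ | rfl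
    · rcases Fin.eq_castSucc_or_eq_last i with ⟨i', rfl⟩ | rfl
      · simpa only [Fin.snoc_castSucc] using
          Fin.castSucc_lt_castSucc_iff.mpr (a.strictMono (Fin.castSucc_lt_castSucc_iff.mp h))
      · exact absurd (lt_trans h (Fin.castSucc_lt_last k')) (lt_irrefl _)
    · rcases Fin.eq_castSucc_or_eq_last i with ⟨i', rfl⟩ | rfl
      · simp only [Fin.snoc_castSucc, Fin.snoc_last]
        exact Fin.castSucc_lt_last _
      · exact absurd h (lt_irrefl _))

/-- A subset of `[n]_{j+1}` is well-formed if distinct elements share no even face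
and no odd face. -/
def WellFormed {n j : ℕ} (ξ : Set (Simplex n (j+1))) : Prop :=
  ∀ a ∈ ξ, ∀ b ∈ ξ, a ≠ b →
    posFaces a ∩ posFaces b = ∅ ∧ negFaces a ∩ negFaces b = ∅

/-- `ξ` moves `μ` to `π`. -/
def Moves {n j : ℕ} (ξ : Set (Simplex n (j+1))) (μ π : Set (Simplex n j)) : Prop :=
  π = (μ ∪ setPos ξ) \ setNeg ξ ∧ μ = (π ∪ setNeg ξ) \ setPos ξ


section aux
variable {n j : ℕ}

lemma face_apply (a : Simplex n (j+1)) (k : Fin (j+2)) (i : Fin (j+1)) :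
    face a k i = a (k.succAbove i) := rfl

lemma liftS_apply (a : Simplex n j) (i : Fin (j+1)) :
    liftS a i = (a i).castSucc := rfl

lemma vee_castSucc (a : Simplex n j) (i : Fin (j+1)) :
    vee a i.castSucc = (a i).castSucc := by
  exact Fin.snoc_castSucc (α := fun _ => Fin (n+2)) (Fin.last (n+1)) (fun i => (a i).castSucc) i

lemma vee_last (a : Simplex n j) :
    vee a (Fin.last (j+1)) = Fin.last (n+1) := by
  exact Fin.snoc_last (α := fun _ => Fin (n+2)) (Fin.last (n+1)) (fun i => (a i).castSucc)

lemma liftS_inj : Function.Injective (liftS (n := n) (j := j)) := by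
  intro a b h
  ext i
  have h2 : a i = b i := Fin.castSucc_inj.mp (DFunLike.congr_fun h i)
  rw [h2]

lemma vee_inj : Function.Injective (vee (n := n) (j := j)) := by
  intro a b h
  ext i
  have h2 : (a i).castSucc = (b i).castSucc := by
    have := DFunLike.congr_fun h i.castSucc
    rwa [vee_castSucc, vee_castSucc] at this
  rw [Fin.castSucc_inj.mp h2]

lemma vee_ne_liftS (c : Simplex n j) (d : Simplex n (j+1)) : vee c ≠ liftS d := by
  intro h
  have := DFunLike.congr_fun h (Fin.last (j+1))
  rw [vee_last, liftS_apply] at this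
  exact absurd this.symm (Fin.castSucc_lt_last _).ne

lemma face_liftS (a : Simplex n (j+1)) (k : Fin (j+2)) :
    face (liftS a) k = liftS (face a k) := rfl

lemma face_vee_castSucc (a : Simplex n (j+1)) (k : Fin (j+2)) :
    face (vee a) k.castSucc = vee (face a k) := by
  ext i
  rcases Fin.eq_castSucc_or_eq_last i with ⟨i', rfl⟩ | rfl
  · show (face (vee a) k.castSucc i'.castSucc : ℕ) = (vee (face a k) i'.castSucc : ℕ)
    rw [face_apply, vee_castSucc, Fin.castSucc_succAbove_castSucc, vee_castSucc, face_apply]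
  · show (face (vee a) k.castSucc (Fin.last _) : ℕ) = (vee (face a k) (Fin.last _) : ℕ)
    rw [face_apply, vee_last]
    have : k.castSucc.succAbove (Fin.last (j+1)) = Fin.last (j+2) := by
      rw [Fin.succAbove_of_le_castSucc _ _ (by simp [Fin.le_castSucc_iff, Fin.castSucc_lt_last]), Fin.succ_last]
    rw [this, vee_last]

lemma face_vee_last (a : Simplex n (j+1)) :
    face (vee a) (Fin.last (j+2)) = liftS a := by
  ext i
  show (face (vee a) _ i : ℕ) = _
  rw [face_apply, Fin.succAbove_last, vee_castSucc, liftS_apply]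

end aux

section aux2
variable {n j : ℕ}

lemma posFaces_liftS (a : Simplex n (j+1)) :
    posFaces (liftS a) = liftS '' posFaces a := by
  ext b
  constructor
  · rintro ⟨k, hk, rfl⟩
    exact ⟨face a k, ⟨k, hk, rfl⟩, (face_liftS a k).symm⟩
  · rintro ⟨b, ⟨k, hk, rfl⟩, rfl⟩
    exact ⟨k, hk, (face_liftS a k)⟩

lemma negFaces_liftS (a : Simplex n (j+1)) :
    negFaces (liftS a) = liftS '' negFaces a := by
  ext b
  constructor
  · rintro ⟨k, hk, rfl⟩
    exact ⟨face a k, ⟨k, hk, rfl⟩, (face_liftS a k).symm⟩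
  · rintro ⟨b, ⟨k, hk, rfl⟩, rfl⟩
    exact ⟨k, hk, (face_liftS a k)⟩

lemma posFaces_vee (hj : Odd j) (a : Simplex n (j+1)) :
    posFaces (vee a) = vee '' posFaces a := by
  have hO : j % 2 = 1 := Nat.odd_iff.mp hj
  ext b
  constructor
  · rintro ⟨k, hk, rfl⟩
    rcases Fin.eq_castSucc_or_eq_last k with ⟨k', rfl⟩ | rfl
    · exact ⟨face a k', ⟨k', by simpa using hk, rfl⟩, (face_vee_castSucc a k').symm⟩
    · rw [Fin.val_last, Nat.even_iff] at hk; omega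
  · rintro ⟨b, ⟨k, hk, rfl⟩, rfl⟩
    exact ⟨k.castSucc, by simpa using hk, (face_vee_castSucc a k).symm⟩

lemma negFaces_vee (hj : Odd j) (a : Simplex n (j+1)) :
    negFaces (vee a) = vee '' negFaces a ∪ {liftS a} := by
  have hO : j % 2 = 1 := Nat.odd_iff.mp hj
  ext b
  constructor
  · rintro ⟨k, hk, rfl⟩
    rcases Fin.eq_castSucc_or_eq_last k with ⟨k', rfl⟩ | rfl
    · exact Or.inl ⟨face a k', ⟨k', by simpa using hk, rfl⟩, (face_vee_castSucc a k').symm⟩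
    · exact Or.inr (face_vee_last a)
  · rintro (⟨b, ⟨k, hk, rfl⟩, rfl⟩ | hb)
    · exact ⟨k.castSucc, by simpa using hk, (face_vee_castSucc a k).symm⟩
    · refine ⟨Fin.last (j+2), ?_, ?_⟩
      · rw [Fin.val_last, Nat.odd_iff]; omega
      · rw [hb, face_vee_last]

lemma img_inter_empty {α β} {f : α → β} (hf : Function.Injective f) {s t : Set α}
    (h : s ∩ t = ∅) : f '' s ∩ f '' t = ∅ := by
  rw [← Set.image_inter hf, h, Set.image_empty]

lemma lift_vee_empty {S : Set (Simplex n (j+1))} {T : Set (Simplex n j)} :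
    liftS '' S ∩ vee '' T = ∅ := by
  rw [Set.eq_empty_iff_forall_notMem]
  rintro e ⟨⟨d, _, rfl⟩, ⟨c, _, h⟩⟩
  exact vee_ne_liftS c d h

lemma mixed_case (hj : Odd j) (ab : Simplex n (j+2)) (c : Simplex n (j+1))
    (hdc : c ∉ negFaces ab) :
    posFaces (liftS ab) ∩ posFaces (vee c) = ∅ ∧
      negFaces (liftS ab) ∩ negFaces (vee c) = ∅ := by
  constructor
  · rw [posFaces_liftS, posFaces_vee hj]
    exact lift_vee_empty
  · rw [negFaces_liftS, negFaces_vee hj]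
    rw [Set.eq_empty_iff_forall_notMem]
    rintro e ⟨⟨d, hd, rfl⟩, (⟨c', _, h2⟩ | h2)⟩
    · exact vee_ne_liftS c' d h2
    · rw [Set.mem_singleton_iff] at h2
      exact hdc (liftS_inj h2.symm ▸ hd)

end aux2
/-- If `x` and `x̄` are well-formed and `x̄⁻ ∩ x = ∅`, then `x̄ ∪ x∨` is
well-formed (for `j` odd). -/

theorem union_wf_of_wf (n j : ℕ) (hj : Odd j)
    (x : Set (Simplex n (j+1))) (xb : Set (Simplex n (j+2)))
    (hx : WellFormed x) (hxb : WellFormed xb)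
    (hd : setNeg xb ∩ x = ∅) :
    WellFormed (liftS '' xb ∪ vee '' x) := by
  rintro A (⟨a1, ha1, rfl⟩ | ⟨c1, hc1, rfl⟩) B (⟨a2, ha2, rfl⟩ | ⟨c2, hc2, rfl⟩) hne
  · have hne' : a1 ≠ a2 := fun h => hne (by rw [h])
    obtain ⟨hp, hn⟩ := hxb a1 ha1 a2 ha2 hne'
    exact ⟨by rw [posFaces_liftS, posFaces_liftS]; exact img_inter_empty liftS_inj hp,
           by rw [negFaces_liftS, negFaces_liftS]; exact img_inter_empty liftS_inj hn⟩
  · have hdc : c2 ∉ negFaces a1 := fun h => by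
      have h2 : c2 ∈ setNeg xb ∩ x := ⟨Set.mem_biUnion ha1 h, hc2⟩
      rw [hd] at h2; exact h2
    exact mixed_case hj a1 c2 hdc
  · have hdc : c1 ∉ negFaces a2 := fun h => by
      have h2 : c1 ∈ setNeg xb ∩ x := ⟨Set.mem_biUnion ha2 h, hc1⟩
      rw [hd] at h2; exact h2
    obtain ⟨hp, hn⟩ := mixed_case hj a2 c1 hdc
    exact ⟨by rw [Set.inter_comm]; exact hp, by rw [Set.inter_comm]; exact hn⟩
  · have hne' : c1 ≠ c2 := fun h => hne (by rw [h])
    obtain ⟨hp, hn⟩ := hx c1 hc1 c2 hc2 hne'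
    refine ⟨by rw [posFaces_vee hj, posFaces_vee hj]; exact img_inter_empty vee_inj hp, ?_⟩
    rw [negFaces_vee hj, negFaces_vee hj, Set.eq_empty_iff_forall_notMem]
    rintro e ⟨(h1 | h1), (h2 | h2)⟩
    · exact Set.eq_empty_iff_forall_notMem.mp (img_inter_empty vee_inj hn) e ⟨h1, h2⟩
    · rw [Set.mem_singleton_iff] at h2
      obtain ⟨c', _, rfl⟩ := h1
      exact vee_ne_liftS c' c2 h2
    · rw [Set.mem_singleton_iff] at h1
      obtain ⟨c', _, rfl⟩ := h2
      exact vee_ne_liftS c' c1 h1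
    · rw [Set.mem_singleton_iff] at h1 h2
      exact hne' (liftS_inj (h1.symm.trans h2))
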